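/- Let A be a Banach algebra, X a Banach A-bimodule, and φ : A × A → [0,∞) with lim_{n→∞} φ(2ⁿa, 2ⁿb)/8ⁿ = 0 for all a, b. If fₙ : A → X is a sequence converging pointwise to D : A → X and f : A → X satisfies ‖f(cd) − f(c)·d³ − c³·f(d)‖ ≤ φ(c,d), and D(a) = lim_{n→∞} f(2ⁿa)/8ⁿ, then D(cd) = D(c)·d³ + c³·D(d) for all c, d ∈ A. -/

import Mathlib

open Filter Topology

private lemma natCast_smul_comm' {B X : Type*} [Monoid B] [AddCommMonoid X] [Module ℂ X]
    [DistribMulAction B X] (k : ℕ) (b : B) (x : X) :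
    ((k : ℂ)) • (b • x) = b • (((k : ℂ)) • x) := by
  rw [Nat.cast_smul_eq_nsmul, Nat.cast_smul_eq_nsmul, smul_comm]

private lemma natCast_smul_act {B X : Type*} [Ring B] [Algebra ℂ B] [AddCommGroup X]
    [Module ℂ X] [Module B X] (k : ℕ) (b : B) (x : X) :
    (((k : ℕ) : ℂ) • b) • x = ((k : ℕ) : ℂ) • (b • x) := by
  rw [Algebra.smul_def, map_natCast, mul_smul, Nat.cast_smul_eq_nsmul, ← Nat.cast_smul_eq_nsmul ℂ]

private lemma cube_smul {B : Type*} [Ring B] [Algebra ℂ B] (z : ℂ) (a : B) :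
    (z • a) * (z • a) * (z • a) = (z * z * z) • (a * a * a) := by
  rw [smul_mul_smul_comm, smul_mul_smul_comm]

theorem cubic_derivation_limit {A X : Type*}
    [NormedRing A] [NormedAlgebra ℂ A] [CompleteSpace A]
    [NormedAddCommGroup X] [NormedSpace ℂ X] [CompleteSpace X]
    [Module A X] [Module Aᵐᵒᵖ X] [SMulCommClass A Aᵐᵒᵖ X]
    [IsBoundedSMul A X] [IsBoundedSMul Aᵐᵒᵖ X]
    (φ : A → A → ℝ)
    (hφ : ∀ a b : A, Tendsto (fun n : ℕ => φ (((2 : ℂ) ^ n) • a) (((2 : ℂ) ^ n) • b) / 8 ^ n)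
      atTop (𝓝 0))
    (f : A → X) (D : A → X) (fs : ℕ → A → X)
    (hfs : ∀ n : ℕ, ∀ a : A, fs n a = ((8 : ℂ) ^ n)⁻¹ • f (((2 : ℂ) ^ n) • a))
    (hconv : ∀ a : A, Tendsto (fun n : ℕ => fs n a) atTop (𝓝 (D a)))
    (hf : ∀ c d : A, ‖f (c * d) - MulOpposite.op (d * d * d) • f c - (c * c * c) • f d‖
      ≤ φ c d) :
    ∀ c d : A, D (c * d) = MulOpposite.op (d * d * d) • D c + (c * c * c) • D d := by
  intro c d
  set g : ℕ → X := fun n =>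
    fs (2 * n) (c * d) - MulOpposite.op (d * d * d) • fs n c - (c * c * c) • fs n d with hg
  -- key algebraic identity
  have key : ∀ n : ℕ, ((8 : ℂ) ^ (2 * n)) • g n =
      f ((((2 : ℂ) ^ n) • c) * (((2 : ℂ) ^ n) • d))
        - MulOpposite.op ((((2 : ℂ) ^ n) • d) * (((2 : ℂ) ^ n) • d) * (((2 : ℂ) ^ n) • d))
            • f (((2 : ℂ) ^ n) • c)
        - ((((2 : ℂ) ^ n) • c) * (((2 : ℂ) ^ n) • c) * (((2 : ℂ) ^ n) • c))
            • f (((2 : ℂ) ^ n) • d) := by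
    intro n
    have h8 : ((8 : ℂ) ^ n) ≠ 0 := pow_ne_zero _ (by norm_num)
    have h82 : ((8 : ℂ) ^ (2 * n)) ≠ 0 := pow_ne_zero _ (by norm_num)
    have hcube : ((2 : ℂ) ^ n) * ((2 : ℂ) ^ n) * ((2 : ℂ) ^ n) = (8 : ℂ) ^ n := by
      rw [← mul_pow, ← mul_pow]; norm_num
    have hmulcd : (((2 : ℂ) ^ n) • c) * (((2 : ℂ) ^ n) • d) = ((2 : ℂ) ^ (2 * n)) • (c * d) := by
      rw [smul_mul_smul_comm, ← pow_add, two_mul]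
    have hcast : ((8 : ℂ) ^ n) = (((8 ^ n : ℕ) : ℂ)) := by push_cast; ring
    have hcast2 : ((8 : ℂ) ^ (2 * n)) = (((8 ^ (2 * n) : ℕ) : ℂ)) := by push_cast; ring
    rw [hg]
    simp only [hfs, smul_sub]
    congr 1
    · congr 1
      · -- first term
        rw [smul_inv_smul₀ h82, hmulcd]
      · -- op term
        have hcoef : (8 : ℂ) ^ (2 * n) * ((8 : ℂ) ^ n)⁻¹ = (8 : ℂ) ^ n := by
          rw [two_mul, pow_add, mul_assoc, mul_inv_cancel₀ h8, mul_one]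
        rw [hcast2, natCast_smul_comm', ← hcast2, smul_smul ((8:ℂ)^(2*n)) (((8:ℂ)^n)⁻¹),
          hcoef, cube_smul, hcube, MulOpposite.op_smul, hcast, natCast_smul_act,
          natCast_smul_comm']
    · -- left-action term
      have hcoef : (8 : ℂ) ^ (2 * n) * ((8 : ℂ) ^ n)⁻¹ = (8 : ℂ) ^ n := by
        rw [two_mul, pow_add, mul_assoc, mul_inv_cancel₀ h8, mul_one]
      rw [hcast2, natCast_smul_comm', ← hcast2, smul_smul ((8:ℂ)^(2*n)) (((8:ℂ)^n)⁻¹),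
        hcoef, cube_smul, hcube, hcast, natCast_smul_act, natCast_smul_comm']
  -- norm bound on g
  have hbound : ∀ n : ℕ, ‖g n‖ ≤
      φ (((2 : ℂ) ^ n) • c) (((2 : ℂ) ^ n) • d) / 8 ^ n * ((1 : ℝ) / 8) ^ n := by
    intro n
    have h1 : (8 : ℝ) ^ (2 * n) * ‖g n‖ = ‖((8 : ℂ) ^ (2 * n)) • g n‖ := by
      rw [norm_smul]
      simp [norm_pow]
    have h2 : (8 : ℝ) ^ (2 * n) * ‖g n‖ ≤ φ (((2 : ℂ) ^ n) • c) (((2 : ℂ) ^ n) • d) := by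
      rw [h1, key n]; exact hf _ _
    have h3 : (0 : ℝ) < 8 ^ (2 * n) := by positivity
    have h4 : ‖g n‖ ≤ φ (((2 : ℂ) ^ n) • c) (((2 : ℂ) ^ n) • d) / 8 ^ (2 * n) := by
      rw [le_div_iff₀ h3]; linarith [h2]
    have h5 : φ (((2 : ℂ) ^ n) • c) (((2 : ℂ) ^ n) • d) / 8 ^ (2 * n) =
        φ (((2 : ℂ) ^ n) • c) (((2 : ℂ) ^ n) • d) / 8 ^ n * ((1 : ℝ) / 8) ^ n := by
      rw [two_mul, pow_add, div_pow, one_pow]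
      have h8r : ((8 : ℝ) ^ n) ≠ 0 := by positivity
      field_simp
    rw [← h5]; exact h4
  -- g tends to 0
  have hg0 : Tendsto g atTop (𝓝 0) := by
    apply squeeze_zero_norm hbound
    have := (hφ c d).mul
      (tendsto_pow_atTop_nhds_zero_of_lt_one (by norm_num : (0:ℝ) ≤ 1/8) (by norm_num))
    simpa using this
  -- g tends to the difference
  have hglim : Tendsto g atTop
      (𝓝 (D (c * d) - MulOpposite.op (d * d * d) • D c - (c * c * c) • D d)) := by
    have h1 : Tendsto (fun n : ℕ => fs (2 * n) (c * d)) atTop (𝓝 (D (c * d))) :=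
      (hconv (c * d)).comp ((strictMono_mul_left_of_pos (by norm_num : (0:ℕ) < 2)).tendsto_atTop)
    have h2 : Tendsto (fun n : ℕ => MulOpposite.op (d * d * d) • fs n c) atTop
        (𝓝 (MulOpposite.op (d * d * d) • D c)) := (hconv c).const_smul _
    have h3 : Tendsto (fun n : ℕ => (c * c * c) • fs n d) atTop
        (𝓝 ((c * c * c) • D d)) := (hconv d).const_smul _
    exact (h1.sub h2).sub h3
  have hz := tendsto_nhds_unique hglim hg0
  rw [sub_sub] at hz
  exact sub_eq_zero.mp hz
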